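/- Let 𝒪 be an order ideal in P = K[x_0,…,x_n], fix a labeling of ∂𝒪 ordered increasingly by degree, and let G be a homogeneous ∂𝒪-prebasis. Let f ∈ P be nonzero and h ∈ ⟨𝒪⟩. Then the following are equivalent: (i) f − h ∈ ⟨𝒯G⟩; (ii) f →⁺_G h; (iii) f − h has an ind_𝒪(f)-lower representation by 𝒯G. Moreover, if f is homogeneous of degree d and h ∈ ⟨𝒪_d⟩, these are also equivalent to: f − h ∈ ⟨𝒯G_d⟩, and to: f − h has an ind_𝒪(f)-lower representation by 𝒯G_d. -/

import Mathlib

open MvPolynomial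

namespace Border

/-- A term of `K[x_0, …, x_n]`, identified with its exponent vector. -/
abbrev Term (n : ℕ) := Fin (n + 1) →₀ ℕ

variable {n : ℕ}

/-- The (standard) degree of a term. -/
def tdeg (m : Term n) : ℕ := ∑ i, m i

/-- An order ideal: a nonempty set of terms closed under divisors. -/
def IsOrderIdeal (O : Set (Term n)) : Prop :=
  O.Nonempty ∧ ∀ τ ∈ O, ∀ τ' : Term n, τ' ≤ τ → τ' ∈ O

/-- The border `∂𝒪 = (x_0·𝒪 ∪ ⋯ ∪ x_n·𝒪) ∖ 𝒪`. -/
def border (O : Set (Term n)) : Set (Term n) :=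
  {σ | σ ∉ O ∧ ∃ r : Fin (n + 1), ∃ τ ∈ O, σ = τ + Finsupp.single r 1}

/-- Multiplicative set of a border term `σ`, with respect to a labeling `lab` of the border:
`𝒯_σ = {η : σ' ∤ η·σ for every border term σ' with a larger label}`. -/
def mulSet (O : Set (Term n)) (lab : Term n → ℕ) (σ : Term n) : Set (Term n) :=
  {η | ∀ σ' ∈ border O, lab σ < lab σ' → ¬ σ' ≤ η + σ}

/-- The cone `C(σ) = {η·σ : η ∈ 𝒯_σ}`. -/
def cone (O : Set (Term n)) (lab : Term n → ℕ) (σ : Term n) : Set (Term n) :=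
  (fun η => η + σ) '' mulSet O lab σ

/-- A labeling of the border which is injective and ordered increasingly by degree. -/
def DegOrderedLabeling (O : Set (Term n)) (lab : Term n → ℕ) : Prop :=
  Set.InjOn lab (border O) ∧
    ∀ σ ∈ border O, ∀ σ' ∈ border O, lab σ < lab σ' → tdeg σ ≤ tdeg σ'

/-- Iterated border closures: `∂⁰𝒪 := 𝒪`, and the `(k+1)`-st closure adds the border. -/
def borderClosure (O : Set (Term n)) : ℕ → Set (Term n)
  | 0 => O
  | k + 1 => borderClosure O k ∪ border (borderClosure O k)

/-- The index `ind_𝒪(τ)`: the least `k` with `τ ∈ ∂^k𝒪`. -/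
noncomputable def ind (O : Set (Term n)) (τ : Term n) : ℕ :=
  sInf {k | τ ∈ borderClosure O k}

/-- Degree-`d` part of a set of terms. -/
def Od (O : Set (Term n)) (d : ℕ) : Set (Term n) := {τ | τ ∈ O ∧ tdeg τ = d}

variable {K : Type*} [Field K]

/-- The index of a nonzero polynomial: the maximal index of a term of its support. -/
noncomputable def indP (O : Set (Term n)) (f : MvPolynomial (Fin (n + 1)) K) : ℕ :=
  f.support.sup (ind O)

/-- A homogeneous `∂𝒪`-prebasis: a family `g σ = σ - Σ_{τ ∈ 𝒪_{deg σ}} c_{στ} τ`. -/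
def IsPrebasis (O : Set (Term n)) (g : Term n → MvPolynomial (Fin (n + 1)) K) : Prop :=
  ∀ σ ∈ border O, ∀ τ ∈ (monomial σ (1 : K) - g σ).support, τ ∈ O ∧ tdeg τ = tdeg σ

/-- The set of border reductors `𝒯G = {η·g_σ : σ ∈ ∂𝒪, η ∈ 𝒯_σ}`. -/
def reductors (O : Set (Term n)) (lab : Term n → ℕ)
    (g : Term n → MvPolynomial (Fin (n + 1)) K) : Set (MvPolynomial (Fin (n + 1)) K) :=
  {p | ∃ σ ∈ border O, ∃ η ∈ mulSet O lab σ, p = monomial η (1 : K) * g σ}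

/-- The degree-`d` border reductors `𝒯G_d = 𝒯G ∩ P_d`. -/
def reductorsDeg (O : Set (Term n)) (lab : Term n → ℕ)
    (g : Term n → MvPolynomial (Fin (n + 1)) K) (d : ℕ) :
    Set (MvPolynomial (Fin (n + 1)) K) :=
  reductors O lab g ∩ {p | p.IsHomogeneous d}

/-- One step of the border reduction relation `→_G`. -/
def Step (O : Set (Term n)) (lab : Term n → ℕ)
    (g : Term n → MvPolynomial (Fin (n + 1)) K)
    (f h : MvPolynomial (Fin (n + 1)) K) : Prop :=
  ∃ σ ∈ border O, ∃ η ∈ mulSet O lab σ, η + σ ∈ f.support ∧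
    h = f - f.coeff (η + σ) • (monomial η (1 : K) * g σ)

/-- The border reduction relation `→⁺_G` (finitely many, possibly zero, steps). -/
def Reduces (O : Set (Term n)) (lab : Term n → ℕ)
    (g : Term n → MvPolynomial (Fin (n + 1)) K) :
    MvPolynomial (Fin (n + 1)) K → MvPolynomial (Fin (n + 1)) K → Prop :=
  Relation.ReflTransGen (Step O lab g)

/-- The `K`-vector space spanned by a set of terms. -/
noncomputable def spanTerms (K : Type*) [Field K] (S : Set (Term n)) :
    Submodule K (MvPolynomial (Fin (n + 1)) K) :=
  Submodule.span K ((fun τ => monomial τ (1 : K)) '' S)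

/-- The ideal `(G)` generated by a `∂𝒪`-prebasis. -/
noncomputable def idealG (O : Set (Term n)) (g : Term n → MvPolynomial (Fin (n + 1)) K) :
    Ideal (MvPolynomial (Fin (n + 1)) K) :=
  Ideal.span (g '' border O)

/-- The degree-`d` part `I_d` of an ideal, as a `K`-vector subspace. -/
noncomputable def degPart (I : Ideal (MvPolynomial (Fin (n + 1)) K)) (d : ℕ) :
    Submodule K (MvPolynomial (Fin (n + 1)) K) :=
  Submodule.restrictScalars K I ⊓ homogeneousSubmodule (Fin (n + 1)) K d

/-- Homogeneous ideal. -/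
def IsHomogeneousIdeal (I : Ideal (MvPolynomial (Fin (n + 1)) K)) : Prop :=
  ∀ f ∈ I, ∀ d : ℕ, homogeneousComponent d f ∈ I

/-- `G` is a homogeneous `∂𝒪`-basis of `J`: it is a prebasis contained in `J` and for every
`d` one has `P_d = J_d ⊕ ⟨𝒪_d⟩`, i.e. the residue classes of `𝒪_d` are a basis of `P_d/J_d`. -/
def IsBorderBasisOf (O : Set (Term n)) (g : Term n → MvPolynomial (Fin (n + 1)) K)
    (J : Ideal (MvPolynomial (Fin (n + 1)) K)) : Prop :=
  IsPrebasis O g ∧ (∀ σ ∈ border O, g σ ∈ J) ∧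
    ∀ d : ℕ, degPart J d ⊔ spanTerms K (Od O d) = homogeneousSubmodule (Fin (n + 1)) K d ∧
      Disjoint (degPart J d) (spanTerms K (Od O d))

/-- An `m`-lower representation of `f` by `𝒯G`: `f = Σ c_j • η_j·g_{σ_j}` with distinct
pairs `(η_j, σ_j)`, `η_j ∈ 𝒯_{σ_j}` and `ind(η_j σ_j) ≤ m`. -/
def HasLRep (O : Set (Term n)) (lab : Term n → ℕ)
    (g : Term n → MvPolynomial (Fin (n + 1)) K)
    (f : MvPolynomial (Fin (n + 1)) K) (m : ℕ) : Prop :=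
  ∃ (s : Finset (Term n × Term n)) (c : Term n × Term n → K),
    (∀ p ∈ s, p.2 ∈ border O ∧ p.1 ∈ mulSet O lab p.2 ∧ ind O (p.1 + p.2) ≤ m) ∧
    f = ∑ p ∈ s, c p • (monomial p.1 (1 : K) * g p.2)

/-- An `m`-lower representation of `f` by `𝒯G_d`. -/
def HasLRepDeg (O : Set (Term n)) (lab : Term n → ℕ)
    (g : Term n → MvPolynomial (Fin (n + 1)) K)
    (f : MvPolynomial (Fin (n + 1)) K) (m d : ℕ) : Prop :=
  ∃ (s : Finset (Term n × Term n)) (c : Term n × Term n → K),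
    (∀ p ∈ s, p.2 ∈ border O ∧ p.1 ∈ mulSet O lab p.2 ∧ ind O (p.1 + p.2) ≤ m ∧
      (monomial p.1 (1 : K) * g p.2).IsHomogeneous d) ∧
    f = ∑ p ∈ s, c p • (monomial p.1 (1 : K) * g p.2)

/-- The subtype of terms of `𝒪` of degree `d`. -/
abbrev OdSub (O : Set (Term n)) (d : ℕ) : Type _ := {τ : Term n // τ ∈ Od O d}

lemma tdeg_component_lt {d : ℕ} (m : Term n) (h : tdeg m = d) (i : Fin (n + 1)) :
    m i < d + 1 := by
  have : m i ≤ tdeg m :=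
    Finset.single_le_sum (f := fun j => m j) (fun j _ => Nat.zero_le _) (Finset.mem_univ i)
  omega

instance (O : Set (Term n)) (d : ℕ) : Finite (OdSub O d) := by
  have hinj : Function.Injective
      (fun τ : OdSub O d => fun i : Fin (n + 1) =>
        (⟨τ.1 i, tdeg_component_lt τ.1 τ.2.2 i⟩ : Fin (d + 1))) := by
    intro a b hab
    apply Subtype.ext
    apply Finsupp.ext
    intro i
    simpa using congrArg Fin.val (congrFun hab i)
  exact Finite.of_injective _ hinj

noncomputable instance (O : Set (Term n)) (d : ℕ) : Fintype (OdSub O d) :=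
  Fintype.ofFinite _

open scoped Classical in
/-- The `r`-th `d`-graded formal multiplication matrix of a prebasis `G`,
with rows indexed by `𝒪_{d+1}` and columns by `𝒪_d`. -/
noncomputable def multMatrix (O : Set (Term n))
    (g : Term n → MvPolynomial (Fin (n + 1)) K) (r : Fin (n + 1)) (d : ℕ) :
    Matrix (OdSub O (d + 1)) (OdSub O d) K :=
  Matrix.of fun τ' τ =>
    if τ.1 + Finsupp.single r 1 ∈ O then
      (if τ.1 + Finsupp.single r 1 = τ'.1 then 1 else 0)
    else (monomial (τ.1 + Finsupp.single r 1) (1 : K)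
            - g (τ.1 + Finsupp.single r 1)).coeff τ'.1

/-- The minimum degree of a border term. -/
noncomputable def minDegBorder (O : Set (Term n)) : ℕ := sInf (tdeg '' border O)

/-- The `d`-th Macaulay transformation `a^{⟨d⟩}`, computed greedily. -/
noncomputable def macaulay : ℕ → ℕ → ℕ
  | 0, _ => 0
  | d + 1, a =>
    if a = 0 then 0
    else
      Nat.choose (sSup {k | Nat.choose k (d + 1) ≤ a} + 1) (d + 2) +
        macaulay d (a - Nat.choose (sSup {k | Nat.choose k (d + 1) ≤ a}) (d + 1))

/-- An ideal is generated in degrees `≤ m` if it is generated by its homogeneous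
elements of degree `≤ m`. -/
def GeneratedInDegLE (I : Ideal (MvPolynomial (Fin (n + 1)) K)) (m : ℕ) : Prop :=
  I = Ideal.span {f | f ∈ I ∧ ∃ d ≤ m, f.IsHomogeneous d}

/-! ### Auxiliary lemmas -/

section Aux

lemma tdeg_add (a b : Term n) : tdeg (a + b) = tdeg a + tdeg b := by
  simp [tdeg, Finset.sum_add_distrib]

lemma tdeg_mono {a b : Term n} (h : a ≤ b) : tdeg a ≤ tdeg b :=
  Finset.sum_le_sum fun i _ => h i

lemma tdeg_zero' : tdeg (0 : Term n) = 0 := by simp [tdeg]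

lemma tdeg_single (r : Fin (n+1)) : tdeg (Finsupp.single r 1 : Term n) = 1 := by
  rw [tdeg, Finset.sum_eq_single r (fun b _ hb => Finsupp.single_eq_of_ne' (Ne.symm hb))
    (fun h => absurd (Finset.mem_univ r) h)]
  simp

lemma exists_step_le {a b : Term n} (h : a ≤ b) (hne : a ≠ b) :
    ∃ r, a + Finsupp.single r 1 ≤ b := by
  have : ∃ r, a r < b r := by
    by_contra hc
    push_neg at hc
    exact hne (le_antisymm h fun i => hc i)
  obtain ⟨r, hr⟩ := this
  refine ⟨r, fun i => ?_⟩
  classical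
  rcases eq_or_ne i r with rfl | hi
  · simpa [Finsupp.single_eq_same] using hr
  · simpa [Finsupp.single_eq_of_ne' (Ne.symm hi)] using h i

variable {O : Set (Term n)}

lemma zero_mem_of_orderIdeal (hO : IsOrderIdeal O) : (0 : Term n) ∈ O := by
  obtain ⟨τ, hτ⟩ := hO.1
  exact hO.2 τ hτ 0 (zero_le)

/-- Characterization of the iterated border closure. -/
lemma mem_borderClosure_iff (k : ℕ) (t : Term n) :
    t ∈ borderClosure O k ↔ ∃ τ ∈ O, τ ≤ t ∧ tdeg t ≤ tdeg τ + k := by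
  induction k generalizing t with
  | zero =>
    constructor
    · intro ht
      exact ⟨t, ht, le_rfl, by simp⟩
    · rintro ⟨τ, hτ, hle, hdeg⟩
      have : τ = t := by
        by_contra hne
        obtain ⟨r, hr⟩ := exists_step_le hle hne
        have h5 := tdeg_mono hr
        rw [tdeg_add, tdeg_single] at h5
        omega
      exact this ▸ hτ
  | succ k ih =>
    constructor
    · rintro (ht | ⟨-, r, τ, hτ, rfl⟩)
      · obtain ⟨τ₀, h1, h2, h3⟩ := (ih t).1 ht
        exact ⟨τ₀, h1, h2, h3.trans (by omega)⟩
      · obtain ⟨τ₀, h1, h2, h3⟩ := (ih τ).1 hτ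
        refine ⟨τ₀, h1, h2.trans le_self_add, ?_⟩
        rw [tdeg_add, tdeg_single]
        omega
    · rintro ⟨τ₀, h1, h2, h3⟩
      rcases Nat.lt_or_ge (tdeg t) (tdeg τ₀ + (k + 1)) with hlt | hge
      · exact Or.inl ((ih t).2 ⟨τ₀, h1, h2, by omega⟩)
      · have heq : tdeg t = tdeg τ₀ + (k + 1) := le_antisymm h3 hge
        have hne : τ₀ ≠ t := by
          intro h; rw [h] at heq; omega
        -- t has a "predecessor" above τ₀
        have : ∃ r, τ₀ ≤ t - Finsupp.single r 1 ∧ t = (t - Finsupp.single r 1) + Finsupp.single r 1 := by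
          obtain ⟨r, hr⟩ := exists_step_le h2 hne
          have hsr : Finsupp.single r 1 ≤ t := le_trans (le_add_self) hr
          refine ⟨r, ?_, (tsub_add_cancel_of_le hsr).symm⟩
          have : τ₀ + Finsupp.single r 1 - Finsupp.single r 1 ≤ t - Finsupp.single r 1 :=
            tsub_le_tsub_right hr _
          simpa using this
        obtain ⟨r, hr1, hr2⟩ := this
        have hdegt' : tdeg (t - Finsupp.single r 1) ≤ tdeg τ₀ + k := by
          have := congrArg tdeg hr2
          rw [tdeg_add, tdeg_single] at this
          omega
        have ht' : t - Finsupp.single r 1 ∈ borderClosure O k :=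
          (ih _).2 ⟨τ₀, h1, hr1, hdegt'⟩
        by_cases hmem : t ∈ borderClosure O k
        · exact Or.inl hmem
        · exact Or.inr ⟨hmem, r, _, ht', hr2⟩

lemma borderClosure_mono {k l : ℕ} (h : k ≤ l) :
    borderClosure O k ⊆ borderClosure O l := by
  intro t ht
  rw [mem_borderClosure_iff] at ht ⊢
  obtain ⟨τ, h1, h2, h3⟩ := ht
  exact ⟨τ, h1, h2, h3.trans (by omega)⟩

lemma mem_borderClosure_tdeg (hO : IsOrderIdeal O) (t : Term n) :
    t ∈ borderClosure O (tdeg t) :=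
  (mem_borderClosure_iff _ _).2 ⟨0, zero_mem_of_orderIdeal hO, zero_le, by simp [tdeg_zero']⟩

lemma ind_le_iff (hO : IsOrderIdeal O) {t : Term n} {m : ℕ} :
    ind O t ≤ m ↔ t ∈ borderClosure O m := by
  constructor
  · intro h
    have hne : {k | t ∈ borderClosure O k}.Nonempty := ⟨tdeg t, mem_borderClosure_tdeg hO t⟩
    have := Nat.sInf_mem hne
    exact borderClosure_mono h this
  · intro h
    exact Nat.sInf_le h

lemma ind_le_iff' (hO : IsOrderIdeal O) {t : Term n} {m : ℕ} :
    ind O t ≤ m ↔ ∃ τ ∈ O, τ ≤ t ∧ tdeg t ≤ tdeg τ + m := by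
  rw [ind_le_iff hO, mem_borderClosure_iff]

lemma ind_mem_O (hO : IsOrderIdeal O) {t : Term n} (ht : t ∈ O) : ind O t = 0 :=
  Nat.le_zero.mp ((ind_le_iff hO).2 ht)

lemma ind_pos (hO : IsOrderIdeal O) {t : Term n} (ht : t ∉ O) : 1 ≤ ind O t := by
  by_contra h
  push_neg at h
  have : ind O t ≤ 0 := by omega
  exact ht ((ind_le_iff hO).1 this)

/-- Index of a product with a member of `O`. -/
lemma ind_add_mem (hO : IsOrderIdeal O) {τ : Term n} (hτ : τ ∈ O) (η : Term n) :
    ind O (η + τ) ≤ tdeg η :=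
  (ind_le_iff' hO).2 ⟨τ, hτ, le_add_self, by rw [tdeg_add]; omega⟩

/-- From a member of `O` below `t ∉ O`, find a border term dividing `t` of larger degree. -/
lemma exists_border_divisor_gt (hO : IsOrderIdeal O) {τ t : Term n}
    (hτ : τ ∈ O) (hle : τ ≤ t) (ht : t ∉ O) :
    ∃ σ ∈ border O, σ ≤ t ∧ tdeg τ < tdeg σ := by
  have hne : τ ≠ t := fun h => ht (h ▸ hτ)
  obtain ⟨r, hr⟩ := exists_step_le hle hne
  by_cases hmem : τ + Finsupp.single r 1 ∈ O
  · have : tdeg t - tdeg (τ + Finsupp.single r 1) < tdeg t - tdeg τ := by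
      have := tdeg_mono hr
      rw [tdeg_add, tdeg_single] at *
      omega
    obtain ⟨σ, h1, h2, h3⟩ := exists_border_divisor_gt hO hmem hr ht
    rw [tdeg_add, tdeg_single] at h3
    exact ⟨σ, h1, h2, by omega⟩
  · exact ⟨τ + Finsupp.single r 1, ⟨hmem, r, τ, hτ, rfl⟩, hr, by rw [tdeg_add, tdeg_single]; omega⟩
termination_by tdeg t - tdeg τ

end Aux

section Cone

variable {O : Set (Term n)} {lab : Term n → ℕ}

/-- The index of a term of a cone is exactly `deg η + 1`. -/
lemma ind_cone (hO : IsOrderIdeal O) (hlab : DegOrderedLabeling O lab)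
    {σ η : Term n} (hσ : σ ∈ border O) (hη : η ∈ mulSet O lab σ) :
    ind O (η + σ) = tdeg η + 1 := by
  obtain ⟨hσO, r, τ₀, hτ₀, hστ⟩ := hσ
  have hle : ind O (η + σ) ≤ tdeg η + 1 := by
    refine (ind_le_iff' hO).2 ⟨τ₀, hτ₀, ?_, ?_⟩
    · calc τ₀ ≤ σ := hστ ▸ le_self_add
      _ ≤ η + σ := le_add_self
    · rw [tdeg_add, hστ, tdeg_add, tdeg_single]
      omega
  refine le_antisymm hle ?_
  by_contra hc
  push_neg at hc
  have h1 : ind O (η + σ) ≤ tdeg η := by omega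
  obtain ⟨τ, hτ, hτle, hτdeg⟩ := (ind_le_iff' hO).1 h1
  rw [tdeg_add] at hτdeg
  -- tdeg σ ≤ tdeg τ
  have hσadd : η + σ ∉ O := fun hmem => hσO (hO.2 _ hmem σ le_add_self)
  obtain ⟨σ'', hσ'', hσ''le, hσ''deg⟩ := exists_border_divisor_gt hO hτ hτle hσadd
  have hdeg : tdeg σ < tdeg σ'' := by omega
  have hne : σ'' ≠ σ := fun h => by rw [h] at hdeg; omega
  have hlt : lab σ < lab σ'' := by
    rcases lt_trichotomy (lab σ) (lab σ'') with h | h | h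
    · exact h
    · exact absurd (hlab.1 (Set.mem_setOf.mpr ⟨hσO, r, τ₀, hτ₀, hστ⟩) hσ'' h) (Ne.symm hne)
    · exact absurd (hlab.2 _ hσ'' _ ⟨hσO, r, τ₀, hτ₀, hστ⟩ h) (by omega)
  exact hη σ'' hσ'' hlt hσ''le

/-- Every term outside `O` lies in some cone. -/
lemma exists_cone (hO : IsOrderIdeal O) {t : Term n} (ht : t ∉ O) :
    ∃ σ ∈ border O, ∃ η ∈ mulSet O lab σ, t = η + σ := by
  classical
  obtain ⟨σ₀, hσ₀, hσ₀le, -⟩ :=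
    exists_border_divisor_gt hO (zero_mem_of_orderIdeal hO) (zero_le) ht
  set B : Finset (Term n) := (Finset.Iic t).filter (· ∈ border O) with hB
  have hBne : B.Nonempty := ⟨σ₀, by simp [hB, hσ₀, hσ₀le]⟩
  obtain ⟨σ, hσB, hσmax⟩ := Finset.exists_max_image B lab hBne
  simp only [hB, Finset.mem_filter, Finset.mem_Iic] at hσB
  refine ⟨σ, hσB.2, t - σ, ?_, (tsub_add_cancel_of_le hσB.1).symm⟩
  intro σ' hσ' hlab' hle
  rw [tsub_add_cancel_of_le hσB.1] at hle
  have : σ' ∈ B := by simp [hB, hσ', hle]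
  exact absurd (hσmax σ' this) (by omega)

/-- Distinct cone pairs give distinct terms. -/
lemma cone_pair_injective (hlab : DegOrderedLabeling O lab)
    {σ η σ' η' : Term n} (hσ : σ ∈ border O) (hη : η ∈ mulSet O lab σ)
    (hσ' : σ' ∈ border O) (hη' : η' ∈ mulSet O lab σ')
    (heq : η + σ = η' + σ') : σ = σ' ∧ η = η' := by
  have hσσ' : σ = σ' := by
    by_contra hne
    have hlabne : lab σ ≠ lab σ' := fun h => hne (hlab.1 hσ hσ' h)
    rcases lt_or_gt_of_ne hlabne with h | h
    · exact hη σ' hσ' h (heq ▸ le_add_self)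
    · exact hη' σ hσ h (heq ▸ le_add_self)
  subst hσσ'
  exact ⟨rfl, by simpa using add_right_cancel heq⟩

end Cone

section Reductor

variable {K : Type*} [Field K]
variable {O : Set (Term n)} {lab : Term n → ℕ} {g : Term n → MvPolynomial (Fin (n + 1)) K}

lemma tdeg_eq_degree (m : Term n) : Finsupp.degree m = tdeg m := by
  rw [Finsupp.degree, tdeg]
  exact Finset.sum_subset (Finset.subset_univ _)
    (fun i _ hi => Finsupp.notMem_support_iff.mp hi)

lemma tdeg_eq_weight (m : Term n) : (Finsupp.weight 1 m : ℕ) = tdeg m := by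
  rw [← tdeg_eq_degree, Finsupp.degree_eq_weight_one]
  rfl

lemma coeff_g_self (hg : IsPrebasis O g) {σ : Term n} (hσ : σ ∈ border O) :
    coeff σ (g σ) = 1 := by
  have h : σ ∉ (monomial σ (1 : K) - g σ).support := fun h => hσ.1 (hg σ hσ σ h).1
  rw [mem_support_iff, not_not, coeff_sub, coeff_monomial, if_pos rfl, sub_eq_zero] at h
  exact h.symm

lemma mem_support_g (hg : IsPrebasis O g) {σ : Term n} (hσ : σ ∈ border O)
    {β : Term n} (hβ : β ∈ (g σ).support) :
    β = σ ∨ (β ∈ O ∧ tdeg β = tdeg σ) := by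
  by_cases h : β ∈ (monomial σ (1 : K) - g σ).support
  · exact Or.inr (hg σ hσ β h)
  · rw [mem_support_iff, not_not, coeff_sub, sub_eq_zero, coeff_monomial] at h
    rw [mem_support_iff, ← h] at hβ
    by_cases hβσ : σ = β
    · exact Or.inl hβσ.symm
    · simp [hβσ] at hβ

lemma isHomogeneous_g (hg : IsPrebasis O g) {σ : Term n} (hσ : σ ∈ border O) :
    (g σ).IsHomogeneous (tdeg σ) := by
  intro β hβ
  rw [← mem_support_iff] at hβ
  rcases mem_support_g hg hσ hβ with rfl | ⟨-, h⟩
  · exact tdeg_eq_weight β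
  · rw [tdeg_eq_weight, h]

lemma mem_support_monomial_mul {p : MvPolynomial (Fin (n + 1)) K} {η β : Term n}
    (hβ : β ∈ (monomial η (1 : K) * p).support) :
    ∃ γ ∈ p.support, β = η + γ := by
  rw [mem_support_iff, coeff_monomial_mul'] at hβ
  split_ifs at hβ with h
  · refine ⟨β - η, ?_, (add_tsub_cancel_of_le h).symm⟩
    rw [mem_support_iff]
    intro h0
    rw [h0, mul_zero] at hβ
    exact hβ rfl
  · exact absurd rfl hβ

lemma coeff_reductor_self (hg : IsPrebasis O g) {σ : Term n} (hσ : σ ∈ border O)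
    (η : Term n) : coeff (η + σ) (monomial η (1 : K) * g σ) = 1 := by
  rw [coeff_monomial_mul, coeff_g_self hg hσ, one_mul]

lemma mem_support_reductor (hg : IsPrebasis O g) {σ : Term n} (hσ : σ ∈ border O)
    {η β : Term n} (hβ : β ∈ (monomial η (1 : K) * g σ).support) :
    β = η + σ ∨ ∃ τ, τ ∈ O ∧ tdeg τ = tdeg σ ∧ β = η + τ := by
  obtain ⟨γ, hγ, rfl⟩ := mem_support_monomial_mul hβ
  rcases mem_support_g hg hσ hγ with rfl | ⟨h1, h2⟩
  · exact Or.inl rfl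
  · exact Or.inr ⟨γ, h1, h2, rfl⟩

lemma ind_mem_support_reductor (hO : IsOrderIdeal O) (hg : IsPrebasis O g)
    {σ : Term n} (hσ : σ ∈ border O) {η β : Term n}
    (hβ : β ∈ (monomial η (1 : K) * g σ).support) (hne : β ≠ η + σ) :
    ind O β ≤ tdeg η := by
  rcases mem_support_reductor hg hσ hβ with h | ⟨τ, h1, -, rfl⟩
  · exact absurd h hne
  · exact ind_add_mem hO h1 η

lemma isHomogeneous_reductor (hg : IsPrebasis O g) {σ : Term n} (hσ : σ ∈ border O)
    (η : Term n) :
    (monomial η (1 : K) * g σ).IsHomogeneous (tdeg η + tdeg σ) :=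
  IsHomogeneous.mul (isHomogeneous_monomial _ (tdeg_eq_degree η)) (isHomogeneous_g hg hσ)

end Reductor

section StepLemmas

variable {K : Type*} [Field K]
variable {O : Set (Term n)} {lab : Term n → ℕ} {g : Term n → MvPolynomial (Fin (n + 1)) K}

lemma isHomogeneous_smul {K : Type*} [Field K] {d : ℕ} (c : K)
    {p : MvPolynomial (Fin (n + 1)) K} (hp : p.IsHomogeneous d) : (c • p).IsHomogeneous d := by
  intro β hβ
  rw [coeff_smul, smul_eq_mul] at hβ
  exact hp (right_ne_zero_of_mul hβ)

lemma indP_le_of_mem {f : MvPolynomial (Fin (n + 1)) K} {β : Term n}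
    (hβ : β ∈ f.support) : ind O β ≤ indP O f :=
  Finset.le_sup hβ

lemma indP_step_le (hO : IsOrderIdeal O) (hlab : DegOrderedLabeling O lab)
    (hg : IsPrebasis O g) {f f' : MvPolynomial (Fin (n + 1)) K}
    (hst : Step O lab g f f') : indP O f' ≤ indP O f := by
  classical
  obtain ⟨σ, hσ, η, hη, hmem, rfl⟩ := hst
  apply Finset.sup_le
  intro β hβ
  have hβ' : β ∈ f.support ∪ (monomial η (1 : K) * g σ).support := by
    have h1 := MvPolynomial.support_sub (Fin (n + 1)) (p := f) (q := f.coeff (η + σ) • (monomial η (1 : K) * g σ)) hβ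
    rcases Finset.mem_union.1 h1 with h | h
    · exact Finset.mem_union_left _ h
    · exact Finset.mem_union_right _ (MvPolynomial.support_smul h)
  rcases Finset.mem_union.1 hβ' with h | h
  · exact indP_le_of_mem h
  · have hind : ind O β ≤ tdeg η + 1 := by
      rcases eq_or_ne β (η + σ) with rfl | hne
      · rw [ind_cone hO hlab hσ hη]
      · exact (ind_mem_support_reductor hO hg hσ h hne).trans (Nat.le_succ _)
    calc ind O β ≤ tdeg η + 1 := hind
      _ = ind O (η + σ) := (ind_cone hO hlab hσ hη).symm
      _ ≤ indP O f := indP_le_of_mem hmem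

lemma step_isHomogeneous {d : ℕ} (hg : IsPrebasis O g)
    {f f' : MvPolynomial (Fin (n + 1)) K} (hst : Step O lab g f f')
    (hf : f.IsHomogeneous d) :
    f'.IsHomogeneous d ∧ ∃ σ ∈ border O, ∃ η ∈ mulSet O lab σ, η + σ ∈ f.support ∧
      f - f' = f.coeff (η + σ) • (monomial η (1 : K) * g σ) ∧
      (monomial η (1 : K) * g σ).IsHomogeneous d := by
  obtain ⟨σ, hσ, η, hη, hmem, rfl⟩ := hst
  have hd : tdeg η + tdeg σ = d := by
    have := hf (Finsupp.mem_support_iff.mp hmem)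
    rw [tdeg_eq_weight] at this
    rw [← this, tdeg_add]
  have hρ : (monomial η (1 : K) * g σ).IsHomogeneous d :=
    hd ▸ isHomogeneous_reductor hg hσ η
  refine ⟨hf.sub (isHomogeneous_smul _ hρ), σ, hσ, η, hη, hmem, by ring, hρ⟩

lemma step_diff {f f' : MvPolynomial (Fin (n + 1)) K} (hst : Step O lab g f f') :
    ∃ σ ∈ border O, ∃ η ∈ mulSet O lab σ, η + σ ∈ f.support ∧
      f - f' = f.coeff (η + σ) • (monomial η (1 : K) * g σ) := by
  obtain ⟨σ, hσ, η, hη, hmem, rfl⟩ := hst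
  exact ⟨σ, hσ, η, hη, hmem, by ring⟩

end StepLemmas

section LRepLemmas

variable {K : Type*} [Field K]
variable {O : Set (Term n)} {lab : Term n → ℕ} {g : Term n → MvPolynomial (Fin (n + 1)) K}

lemma hasLRep_zero (m : ℕ) : HasLRep O lab g (0 : MvPolynomial (Fin (n + 1)) K) m :=
  ⟨∅, fun _ => 0, by simp, by simp⟩

lemma hasLRep_mono {f : MvPolynomial (Fin (n + 1)) K} {m m' : ℕ} (hm : m ≤ m')
    (h : HasLRep O lab g f m) : HasLRep O lab g f m' := by
  obtain ⟨s, c, hs, hf⟩ := h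
  exact ⟨s, c, fun p hp => ⟨(hs p hp).1, (hs p hp).2.1, (hs p hp).2.2.trans hm⟩, hf⟩

private lemma merge_sum {α M : Type*} [DecidableEq α] [AddCommMonoid M]
    (s s' : Finset α) (F G : α → M) :
    (∑ p ∈ s, F p) + (∑ p ∈ s', G p) =
      ∑ p ∈ s ∪ s', ((if p ∈ s then F p else 0) + (if p ∈ s' then G p else 0)) := by
  rw [Finset.sum_add_distrib, Finset.sum_ite_mem, Finset.sum_ite_mem,
    Finset.union_inter_cancel_left, Finset.union_inter_cancel_right]

lemma hasLRep_add {f f' : MvPolynomial (Fin (n + 1)) K} {m : ℕ}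
    (h : HasLRep O lab g f m) (h' : HasLRep O lab g f' m) :
    HasLRep O lab g (f + f') m := by
  classical
  obtain ⟨s, c, hs, hf⟩ := h
  obtain ⟨s', c', hs', hf'⟩ := h'
  refine ⟨s ∪ s', fun p => (if p ∈ s then c p else 0) + (if p ∈ s' then c' p else 0),
    fun p hp => ?_, ?_⟩
  · rcases Finset.mem_union.1 hp with h | h
    · exact hs p h
    · exact hs' p h
  · rw [hf, hf', merge_sum s s' (fun p => c p • (monomial p.1 (1:K) * g p.2))
      (fun p => c' p • (monomial p.1 (1:K) * g p.2))]
    apply Finset.sum_congr rfl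
    intro p _
    rw [add_smul]
    congr 1 <;> split_ifs <;> simp

lemma hasLRep_smul {f : MvPolynomial (Fin (n + 1)) K} {m : ℕ} (k : K)
    (h : HasLRep O lab g f m) : HasLRep O lab g (k • f) m := by
  obtain ⟨s, c, hs, hf⟩ := h
  refine ⟨s, fun p => k * c p, hs, ?_⟩
  rw [hf, Finset.smul_sum]
  exact Finset.sum_congr rfl fun p _ => by simp [smul_smul]

lemma hasLRep_single {σ η : Term n} {m : ℕ} (hσ : σ ∈ border O) (hη : η ∈ mulSet O lab σ)
    (hind : ind O (η + σ) ≤ m) (c : K) :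
    HasLRep O lab g (c • (monomial η (1 : K) * g σ)) m := by
  refine ⟨{(η, σ)}, fun _ => c, ?_, by simp⟩
  intro p hp
  rw [Finset.mem_singleton] at hp
  subst hp
  exact ⟨hσ, hη, hind⟩

lemma hasLRepDeg_zero (m d : ℕ) : HasLRepDeg O lab g (0 : MvPolynomial (Fin (n + 1)) K) m d :=
  ⟨∅, fun _ => 0, by simp, by simp⟩

lemma hasLRepDeg_add {f f' : MvPolynomial (Fin (n + 1)) K} {m d : ℕ}
    (h : HasLRepDeg O lab g f m d) (h' : HasLRepDeg O lab g f' m d) :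
    HasLRepDeg O lab g (f + f') m d := by
  classical
  obtain ⟨s, c, hs, hf⟩ := h
  obtain ⟨s', c', hs', hf'⟩ := h'
  refine ⟨s ∪ s', fun p => (if p ∈ s then c p else 0) + (if p ∈ s' then c' p else 0),
    fun p hp => ?_, ?_⟩
  · rcases Finset.mem_union.1 hp with h | h
    · exact hs p h
    · exact hs' p h
  · rw [hf, hf', merge_sum s s' (fun p => c p • (monomial p.1 (1:K) * g p.2))
      (fun p => c' p • (monomial p.1 (1:K) * g p.2))]
    apply Finset.sum_congr rfl
    intro p _
    rw [add_smul]
    congr 1 <;> split_ifs <;> simp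

lemma hasLRepDeg_single {σ η : Term n} {m d : ℕ} (hσ : σ ∈ border O) (hη : η ∈ mulSet O lab σ)
    (hind : ind O (η + σ) ≤ m) (hhom : (monomial η (1 : K) * g σ).IsHomogeneous d) (c : K) :
    HasLRepDeg O lab g (c • (monomial η (1 : K) * g σ)) m d := by
  refine ⟨{(η, σ)}, fun _ => c, ?_, by simp⟩
  intro p hp
  rw [Finset.mem_singleton] at hp
  subst hp
  exact ⟨hσ, hη, hind, hhom⟩

lemma hasLRepDeg_hasLRep {f : MvPolynomial (Fin (n + 1)) K} {m d : ℕ}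
    (h : HasLRepDeg O lab g f m d) : HasLRep O lab g f m := by
  obtain ⟨s, c, hs, hf⟩ := h
  exact ⟨s, c, fun p hp => ⟨(hs p hp).1, (hs p hp).2.1, (hs p hp).2.2.1⟩, hf⟩

end LRepLemmas

section ReducesLemmas

variable {K : Type*} [Field K]
variable {O : Set (Term n)} {lab : Term n → ℕ} {g : Term n → MvPolynomial (Fin (n + 1)) K}

lemma reduces_sub_mem_span {f h : MvPolynomial (Fin (n + 1)) K}
    (hred : Reduces O lab g f h) :
    f - h ∈ Submodule.span K (reductors O lab g) := by
  induction hred with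
  | refl => simpa using Submodule.zero_mem _
  | tail hr hstep ih =>
    rename_i b c
    obtain ⟨σ, hσ, η, hη, hmem, heq⟩ := step_diff hstep
    have hbc : b - c ∈ Submodule.span K (reductors O lab g) := by
      rw [heq]
      exact Submodule.smul_mem _ _ (Submodule.subset_span ⟨σ, hσ, η, hη, rfl⟩)
    have : f - c = (f - b) + (b - c) := by ring
    rw [this]
    exact Submodule.add_mem _ ih hbc

lemma reduces_hasLRep (hO : IsOrderIdeal O) (hlab : DegOrderedLabeling O lab)
    (hg : IsPrebasis O g) {f h : MvPolynomial (Fin (n + 1)) K}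
    (hred : Reduces O lab g f h) (m : ℕ) (hm : indP O f ≤ m) :
    HasLRep O lab g (f - h) m ∧ indP O h ≤ m := by
  induction hred with
  | refl => exact ⟨by simpa using hasLRep_zero m, hm⟩
  | tail hr hstep ih =>
    rename_i b c
    obtain ⟨ih1, ih2⟩ := ih
    obtain ⟨σ, hσ, η, hη, hmem, heq⟩ := step_diff hstep
    have hind : ind O (η + σ) ≤ m := (indP_le_of_mem hmem).trans ih2
    have hbc : HasLRep O lab g (b - c) m := heq ▸ hasLRep_single hσ hη hind _
    have hfc : f - c = (f - b) + (b - c) := by ring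
    refine ⟨hfc ▸ hasLRep_add ih1 hbc, ?_⟩
    calc indP O c ≤ indP O b := indP_step_le hO hlab hg hstep
      _ ≤ m := ih2

lemma reduces_hasLRepDeg (hO : IsOrderIdeal O) (hlab : DegOrderedLabeling O lab)
    (hg : IsPrebasis O g) {f h : MvPolynomial (Fin (n + 1)) K} {d : ℕ}
    (hred : Reduces O lab g f h) (hfd : f.IsHomogeneous d) (m : ℕ) (hm : indP O f ≤ m) :
    HasLRepDeg O lab g (f - h) m d ∧ indP O h ≤ m ∧ h.IsHomogeneous d := by
  induction hred with
  | refl => exact ⟨by simpa using hasLRepDeg_zero m d, hm, hfd⟩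
  | tail hr hstep ih =>
    rename_i b c
    obtain ⟨ih1, ih2, ih3⟩ := ih
    obtain ⟨hcd, σ, hσ, η, hη, hmem, heq, hρd⟩ := step_isHomogeneous hg hstep ih3
    have hind : ind O (η + σ) ≤ m := (indP_le_of_mem hmem).trans ih2
    have hbc : HasLRepDeg O lab g (b - c) m d := heq ▸ hasLRepDeg_single hσ hη hind hρd _
    have hfc : f - c = (f - b) + (b - c) := by ring
    refine ⟨hfc ▸ hasLRepDeg_add ih1 hbc, ?_, hcd⟩
    calc indP O c ≤ indP O b := indP_step_le hO hlab hg hstep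
      _ ≤ m := ih2

end ReducesLemmas

section NormalForm

variable {K : Type*} [Field K]
variable {O : Set (Term n)} {lab : Term n → ℕ} {g : Term n → MvPolynomial (Fin (n + 1)) K}

lemma component_le_tdeg (β : Term n) (i : Fin (n + 1)) : β i ≤ tdeg β :=
  Finset.single_le_sum (f := fun j => β j) (fun j _ => Nat.zero_le _) (Finset.mem_univ i)

/-- Every polynomial reduces to a normal form supported on `O`. -/
lemma exists_normal_form (hO : IsOrderIdeal O) (hlab : DegOrderedLabeling O lab)
    (hg : IsPrebasis O g) (D : ℕ) (f : MvPolynomial (Fin (n + 1)) K)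
    (hf : ∀ β ∈ f.support, tdeg β ≤ D) :
    ∃ h, Reduces O lab g f h ∧ (h.support : Set (Term n)) ⊆ O := by
  classical
  set T : Finset (Term n) := Finset.Iic (Finsupp.equivFunOnFinite.symm fun _ => D) with hT
  set W : ℕ := T.card + 1 with hW
  have hTmem : ∀ β : Term n, tdeg β ≤ D → β ∈ T := by
    intro β hβ
    rw [hT, Finset.mem_Iic]
    intro i
    simpa using (component_le_tdeg β i).trans hβ
  suffices H : ∀ N f, (∑ β ∈ f.support, W ^ ind O β) ≤ N →
      (∀ β ∈ f.support, tdeg β ≤ D) →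
      ∃ h, Reduces O lab g f h ∧ (h.support : Set (Term n)) ⊆ O from
    H _ f le_rfl hf
  intro N
  induction N with
  | zero =>
    intro f hsum hdeg
    refine ⟨f, Relation.ReflTransGen.refl, ?_⟩
    intro β hβ
    exfalso
    have h1 : W ^ ind O β ≤ 0 :=
      le_trans (Finset.single_le_sum (f := fun β => W ^ ind O β)
        (fun _ _ => Nat.zero_le _) hβ) hsum
    have : 0 < W ^ ind O β := pow_pos (by omega) _
    omega
  | succ N ih =>
    intro f hsum hdeg
    by_cases hsub : (f.support : Set (Term n)) ⊆ O
    · exact ⟨f, Relation.ReflTransGen.refl, hsub⟩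
    · have : ∃ β₀ ∈ f.support, β₀ ∉ O := by
        by_contra hc
        push_neg at hc
        exact hsub fun β hβ => hc β hβ
      obtain ⟨β₀, hβ₀f, hβ₀O⟩ := this
      obtain ⟨σ, hσ, η, hη, rfl⟩ := exists_cone (lab := lab) hO hβ₀O
      set ρ : MvPolynomial (Fin (n + 1)) K := monomial η (1 : K) * g σ with hρ
      set f' : MvPolynomial (Fin (n + 1)) K := f - f.coeff (η + σ) • ρ with hf'
      have hstep : Step O lab g f f' := ⟨σ, hσ, η, hη, hβ₀f, rfl⟩
      -- support of f'
      have hsupp' : f'.support ⊆ (f.support.erase (η + σ)) ∪ (ρ.support.erase (η + σ)) := by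
        intro β hβ
        have hβne : β ≠ η + σ := by
          intro h
          subst h
          rw [mem_support_iff, hf', coeff_sub, coeff_smul, coeff_reductor_self hg hσ] at hβ
          simp at hβ
        have hβu : β ∈ f.support ∪ ρ.support := by
          have h1 := MvPolynomial.support_sub (Fin (n + 1)) (p := f) (q := f.coeff (η + σ) • ρ) hβ
          rcases Finset.mem_union.1 h1 with h | h
          · exact Finset.mem_union_left _ h
          · exact Finset.mem_union_right _ (MvPolynomial.support_smul h)
        rcases Finset.mem_union.1 hβu with h | h
        · exact Finset.mem_union_left _ (Finset.mem_erase.2 ⟨hβne, h⟩)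
        · exact Finset.mem_union_right _ (Finset.mem_erase.2 ⟨hβne, h⟩)
      have hdegρ : ∀ β ∈ ρ.support, tdeg β ≤ D := by
        intro β hβ
        have hd0 : tdeg (η + σ) ≤ D := hdeg _ hβ₀f
        rcases mem_support_reductor hg hσ hβ with rfl | ⟨τ, -, hτd, rfl⟩
        · exact hd0
        · rw [tdeg_add] at *
          omega
      have hdeg' : ∀ β ∈ f'.support, tdeg β ≤ D := by
        intro β hβ
        rcases Finset.mem_union.1 (hsupp' hβ) with h | h
        · exact hdeg _ (Finset.mem_of_mem_erase h)
        · exact hdegρ _ (Finset.mem_of_mem_erase h)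
      -- measure decreases
      have hindβ₀ : ind O (η + σ) = tdeg η + 1 := ind_cone hO hlab hσ hη
      have hsumρ : (∑ β ∈ ρ.support.erase (η + σ), W ^ ind O β) ≤ T.card * W ^ tdeg η := by
        have h1 : ∀ β ∈ ρ.support.erase (η + σ), W ^ ind O β ≤ W ^ tdeg η := by
          intro β hβ
          obtain ⟨hne, hβρ⟩ := Finset.mem_erase.1 hβ
          exact Nat.pow_le_pow_right (by omega) (ind_mem_support_reductor hO hg hσ hβρ hne)
        calc (∑ β ∈ ρ.support.erase (η + σ), W ^ ind O β)
            ≤ (ρ.support.erase (η + σ)).card • W ^ tdeg η :=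
              Finset.sum_le_card_nsmul _ _ _ h1
          _ = (ρ.support.erase (η + σ)).card * W ^ tdeg η := by rw [smul_eq_mul]
          _ ≤ T.card * W ^ tdeg η := by
              apply Nat.mul_le_mul_right
              apply Finset.card_le_card
              intro β hβ
              exact hTmem β (hdegρ β (Finset.mem_of_mem_erase hβ))
      have hφ' : (∑ β ∈ f'.support, W ^ ind O β) ≤ N := by
        have h2 : (∑ β ∈ f'.support, W ^ ind O β)
            ≤ (∑ β ∈ f.support.erase (η + σ), W ^ ind O β)
              + (∑ β ∈ ρ.support.erase (η + σ), W ^ ind O β) :=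
          le_trans (Finset.sum_le_sum_of_subset hsupp') (by
            have := Finset.sum_union_inter (s₁ := f.support.erase (η + σ))
              (s₂ := ρ.support.erase (η + σ)) (f := fun β => W ^ ind O β)
            omega)
        have h3 : W ^ ind O (η + σ) + (∑ β ∈ f.support.erase (η + σ), W ^ ind O β)
            = ∑ β ∈ f.support, W ^ ind O β :=
          Finset.add_sum_erase _ (fun β => W ^ ind O β) hβ₀f
        have h4 : T.card * W ^ tdeg η < W ^ ind O (η + σ) := by
          rw [hindβ₀, pow_succ, mul_comm (W ^ tdeg η) W]
          have this : 0 < W ^ tdeg η := pow_pos (by omega) _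
          exact (Nat.mul_lt_mul_right this).mpr (by omega)
        have h5 : (∑ β ∈ f'.support, W ^ ind O β) < ∑ β ∈ f.support, W ^ ind O β := by
          calc (∑ β ∈ f'.support, W ^ ind O β)
              ≤ (∑ β ∈ f.support.erase (η + σ), W ^ ind O β)
                + (∑ β ∈ ρ.support.erase (η + σ), W ^ ind O β) := h2
            _ ≤ (∑ β ∈ f.support.erase (η + σ), W ^ ind O β) + T.card * W ^ tdeg η :=
                Nat.add_le_add_left hsumρ _
            _ < (∑ β ∈ f.support.erase (η + σ), W ^ ind O β) + W ^ ind O (η + σ) :=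
                Nat.add_lt_add_left h4 _
            _ = ∑ β ∈ f.support, W ^ ind O β := by rw [Nat.add_comm]; exact h3
        exact Nat.lt_succ_iff.mp (lt_of_lt_of_le h5 hsum)
      obtain ⟨h, hred, hO'⟩ := ih f' hφ' hdeg'
      exact ⟨h, Relation.ReflTransGen.head hstep hred, hO'⟩

end NormalForm

section SpanLemmas

variable {K : Type*} [Field K]
variable {O : Set (Term n)} {lab : Term n → ℕ} {g : Term n → MvPolynomial (Fin (n + 1)) K}

lemma hasLRep_mem_span {p : MvPolynomial (Fin (n + 1)) K} {m : ℕ}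
    (h : HasLRep O lab g p m) : p ∈ Submodule.span K (reductors O lab g) := by
  obtain ⟨s, c, hs, rfl⟩ := h
  refine Submodule.sum_mem _ fun q hq => Submodule.smul_mem _ _ ?_
  exact Submodule.subset_span ⟨q.2, (hs q hq).1, q.1, (hs q hq).2.1, rfl⟩

lemma hasLRepDeg_mem_span {p : MvPolynomial (Fin (n + 1)) K} {m d : ℕ}
    (h : HasLRepDeg O lab g p m d) :
    p ∈ Submodule.span K (reductorsDeg O lab g d) := by
  obtain ⟨s, c, hs, rfl⟩ := h
  refine Submodule.sum_mem _ fun q hq => Submodule.smul_mem _ _ ?_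
  exact Submodule.subset_span
    ⟨⟨q.2, (hs q hq).1, q.1, (hs q hq).2.1, rfl⟩, (hs q hq).2.2.2⟩

lemma mem_span_exists_hasLRep {p : MvPolynomial (Fin (n + 1)) K}
    (hp : p ∈ Submodule.span K (reductors O lab g)) :
    ∃ m, HasLRep O lab g p m := by
  refine Submodule.span_induction ?_ ?_ ?_ ?_ hp
  · rintro x ⟨σ, hσ, η, hη, rfl⟩
    refine ⟨ind O (η + σ), ?_⟩
    have := hasLRep_single (g := g) hσ hη le_rfl (1 : K)
    rwa [one_smul] at this
  · exact ⟨0, hasLRep_zero 0⟩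
  · rintro x y - - ⟨mx, hx⟩ ⟨my, hy⟩
    exact ⟨max mx my, hasLRep_add (hasLRep_mono (le_max_left _ _) hx)
      (hasLRep_mono (le_max_right _ _) hy)⟩
  · rintro k x - ⟨mx, hx⟩
    exact ⟨mx, hasLRep_smul k hx⟩

lemma support_subset_of_mem_spanTerms {S : Set (Term n)}
    {p : MvPolynomial (Fin (n + 1)) K} (hp : p ∈ spanTerms K S) :
    (p.support : Set (Term n)) ⊆ S := by
  classical
  refine Submodule.span_induction ?_ ?_ ?_ ?_ hp
  · rintro x ⟨τ, hτ, rfl⟩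
    intro β hβ
    rcases Finset.mem_singleton.1 (Finsupp.support_single_subset hβ) with rfl
    exact hτ
  · simp
  · rintro x y - - hx hy β hβ
    rcases Finset.mem_union.1 (support_add hβ) with h | h
    · exact hx h
    · exact hy h
  · rintro k x - hx β hβ
    exact hx (Finsupp.support_smul hβ)

/-- A nonzero combination of border reductors has a term outside `O`. -/
lemma eq_zero_of_hasLRep_of_support_subset (hO : IsOrderIdeal O)
    (hlab : DegOrderedLabeling O lab) (hg : IsPrebasis O g)
    {p : MvPolynomial (Fin (n + 1)) K} {m : ℕ} (h : HasLRep O lab g p m)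
    (hsupp : (p.support : Set (Term n)) ⊆ O) : p = 0 := by
  classical
  obtain ⟨s, c, hs, hp⟩ := h
  set s' : Finset (Term n × Term n) := s.filter (fun q => c q ≠ 0) with hs'
  have hp' : p = ∑ q ∈ s', c q • (monomial q.1 (1 : K) * g q.2) := by
    rw [hp]
    exact (Finset.sum_filter_of_ne (fun q _ hne => by
      intro hc
      rw [hc, zero_smul] at hne
      exact hne rfl)).symm
  rcases s'.eq_empty_or_nonempty with he | hne
  · rw [hp', he, Finset.sum_empty]
  · exfalso
    obtain ⟨q₀, hq₀, hq₀max⟩ := Finset.exists_max_image s' (fun q => ind O (q.1 + q.2)) hne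
    have hq₀s : q₀ ∈ s := Finset.mem_filter.1 hq₀ |>.1
    have hc₀ : c q₀ ≠ 0 := Finset.mem_filter.1 hq₀ |>.2
    obtain ⟨hσ₀, hη₀, -⟩ := hs q₀ hq₀s
    have hcoeff : coeff (q₀.1 + q₀.2) p = c q₀ := by
      rw [hp']
      rw [coeff_sum]
      rw [Finset.sum_eq_single_of_mem q₀ hq₀ ?_]
      · rw [coeff_smul, coeff_reductor_self hg hσ₀, smul_eq_mul, mul_one]
      · intro q hq hqne
        obtain ⟨hσq, hηq, -⟩ := hs q (Finset.mem_filter.1 hq |>.1)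
        rw [coeff_smul]
        rcases eq_or_ne (coeff (q₀.1 + q₀.2) (monomial q.1 (1 : K) * g q.2)) 0 with h0 | h0
        · rw [h0, smul_zero]
        · exfalso
          have hmem : q₀.1 + q₀.2 ∈ (monomial q.1 (1 : K) * g q.2).support :=
            mem_support_iff.2 h0
          rcases mem_support_reductor hg hσq hmem with heq | ⟨τ, hτ, -, heq⟩
          · obtain ⟨h1, h2⟩ := cone_pair_injective hlab hσq hηq hσ₀ hη₀ heq.symm
            exact hqne (Prod.ext h2 h1)
          · have h1 : ind O (q₀.1 + q₀.2) ≤ tdeg q.1 := heq ▸ ind_add_mem hO hτ q.1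
            have h2 : ind O (q.1 + q.2) ≤ ind O (q₀.1 + q₀.2) := hq₀max q hq
            rw [ind_cone hO hlab hσq hηq] at h2
            omega
    have hmemp : q₀.1 + q₀.2 ∈ p.support := mem_support_iff.2 (hcoeff ▸ hc₀)
    have : q₀.1 + q₀.2 ∈ O := hsupp hmemp
    exact hσ₀.1 (hO.2 _ this q₀.2 le_add_self)

end SpanLemmas

/-- **Characterization of reduction.** For nonzero `f` and `h ∈ ⟨𝒪⟩`:
`f - h ∈ ⟨𝒯G⟩` ⟺ `f →⁺_G h` ⟺ `f - h` has an `ind_𝒪(f)`-lower representation by `𝒯G`;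
and if `f` is homogeneous of degree `d` and `h ∈ ⟨𝒪_d⟩`, these are further equivalent to
`f - h ∈ ⟨𝒯G_d⟩` and to `f - h` having an `ind_𝒪(f)`-LRep by `𝒯G_d`. -/
theorem reduction_tfae (O : Set (Term n)) (hO : IsOrderIdeal O)
    (lab : Term n → ℕ) (hlab : DegOrderedLabeling O lab)
    (g : Term n → MvPolynomial (Fin (n + 1)) K) (hg : IsPrebasis O g)
    (f h : MvPolynomial (Fin (n + 1)) K) (hf : f ≠ 0) (hh : h ∈ spanTerms K O) :
    ((f - h ∈ Submodule.span K (reductors O lab g) ↔ Reduces O lab g f h) ∧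
     (Reduces O lab g f h ↔ HasLRep O lab g (f - h) (indP O f))) ∧
    ∀ d : ℕ, f.IsHomogeneous d → h ∈ spanTerms K (Od O d) →
      ((f - h ∈ Submodule.span K (reductorsDeg O lab g d) ↔ Reduces O lab g f h) ∧
       (Reduces O lab g f h ↔ HasLRepDeg O lab g (f - h) (indP O f) d)) := by
  classical
  have hspan_red : f - h ∈ Submodule.span K (reductors O lab g) → Reduces O lab g f h := by
    intro hspan
    obtain ⟨f₀, hred, hsupp₀⟩ := exists_normal_form hO hlab hg
      (f.support.sup tdeg) f (fun β hβ => Finset.le_sup hβ)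
    have h1 : f - f₀ ∈ Submodule.span K (reductors O lab g) := reduces_sub_mem_span hred
    have h2 : f₀ - h ∈ Submodule.span K (reductors O lab g) := by
      have he : f₀ - h = (f - h) - (f - f₀) := by ring
      rw [he]
      exact Submodule.sub_mem _ hspan h1
    have hsupph : (h.support : Set (Term n)) ⊆ O := support_subset_of_mem_spanTerms hh
    have hsupps : ((f₀ - h).support : Set (Term n)) ⊆ O := by
      intro β hβ
      rcases Finset.mem_union.1 (Finsupp.support_sub hβ) with hb | hb
      · exact hsupp₀ hb
      · exact hsupph hb
    obtain ⟨m, hm⟩ := mem_span_exists_hasLRep h2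
    have h0 : f₀ = h := sub_eq_zero.mp
      (eq_zero_of_hasLRep_of_support_subset hO hlab hg hm hsupps)
    rwa [h0] at hred
  have hred_lrep : Reduces O lab g f h → HasLRep O lab g (f - h) (indP O f) :=
    fun hr => (reduces_hasLRep hO hlab hg hr _ le_rfl).1
  refine ⟨⟨⟨hspan_red, reduces_sub_mem_span⟩,
    ⟨hred_lrep, fun hl => hspan_red (hasLRep_mem_span hl)⟩⟩, ?_⟩
  intro d hfd hhd
  have hred_lrepd : Reduces O lab g f h → HasLRepDeg O lab g (f - h) (indP O f) d :=
    fun hr => (reduces_hasLRepDeg hO hlab hg hr hfd _ le_rfl).1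
  refine ⟨⟨fun hs => hspan_red (Submodule.span_mono Set.inter_subset_left hs),
    fun hr => hasLRepDeg_mem_span (hred_lrepd hr)⟩,
    ⟨hred_lrepd, fun hl => hspan_red (hasLRep_mem_span (hasLRepDeg_hasLRep hl))⟩⟩

end Border
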